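/- The ℤ-module ∏_{n ∈ ℕ} ℤ (the countable direct product of copies of ℤ) is not a projective ℤ-module. -/

import Mathlib

open Finsupp

/-- Baer: the countable direct product of copies of `ℤ` is not a projective
`ℤ`-module. -/
theorem not_projective_pi_int : ¬ Module.Projective ℤ (ℕ → ℤ) := by
  intro h
  obtain ⟨s, hs⟩ := (Module.projective_def).mp h
  classical
  -- standard basis vectors
  set e : ℕ → (ℕ → ℤ) := fun n => Pi.single n 1 with he
  -- the countable "bad" set of indices
  set B : Set (ℕ → ℤ) := (⋃ n, ((s (e n)).support : Set (ℕ → ℤ))) ∪ {0} with hB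
  have hBcount : B.Countable :=
    (Set.countable_iUnion fun n => (s (e n)).support.countable_toSet).union
      (Set.countable_singleton 0)
  -- the set A of sequences tending to 0 2-adically
  set A : Set (ℕ → ℤ) := {x | ∀ k : ℕ, ∃ N, ∀ n ≥ N, (2:ℤ)^k ∣ x n} with hA
  -- s kills eventually-zero sequences at coordinates outside B
  have zeroS : ∀ p ∉ B, ∀ (t : ℕ → ℤ) (N : ℕ), (∀ n ≥ N, t n = 0) → s t p = 0 := by
    intro p hp t N ht
    have htsum : t = ∑ n ∈ Finset.range N, t n • e n := by
      funext m
      rw [Finset.sum_apply]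
      simp only [he, Pi.smul_apply, Pi.single_apply, smul_eq_mul, mul_ite, mul_one, mul_zero]
      rw [Finset.sum_ite_eq (Finset.range N) m t]
      by_cases hm : m < N
      · simp [hm]
      · simp [hm, ht m (le_of_not_gt hm)]
    rw [htsum, map_sum, Finsupp.finset_sum_apply]
    refine Finset.sum_eq_zero fun n _ => ?_
    rw [map_smul, Finsupp.smul_apply]
    have hnp : s (e n) p = 0 := by
      by_contra hne
      exact hp (Or.inl (Set.mem_iUnion.mpr ⟨n, Finsupp.mem_support_iff.mpr hne⟩))
    simp [hnp]
  -- key divisibility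
  have hdvd : ∀ (k : ℕ), ∀ x ∈ A, ∀ p ∉ B, (2:ℤ)^k ∣ s x p := by
    intro k
    induction k with
    | zero => intro x _ p _; simp
    | succ k ih =>
      intro x hx p hp
      set y : ℕ → ℤ := fun n => x n / 2 with hy
      set t : ℕ → ℤ := fun n => x n - 2 * y n with htdef
      obtain ⟨N₁, hN₁⟩ := hx 1
      have ht : ∀ n ≥ N₁, t n = 0 := by
        intro n hn
        obtain ⟨c, hc⟩ := hN₁ n hn
        simp only [htdef, hy, hc, pow_one]
        rw [Int.mul_ediv_cancel_left c two_ne_zero]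
        ring
      have hyA : y ∈ A := by
        intro k'
        obtain ⟨N, hN⟩ := hx (k' + 1)
        refine ⟨N, fun n hn => ?_⟩
        obtain ⟨c, hc⟩ := hN n hn
        have : y n = 2 ^ k' * c := by
          simp only [hy, hc, pow_succ]
          rw [show (2:ℤ) ^ k' * 2 * c = 2 * (2 ^ k' * c) by ring,
            Int.mul_ediv_cancel_left _ two_ne_zero]
        exact ⟨c, this⟩
      have hxeq : x = (2:ℤ) • y + t := by
        funext n; simp [htdef]
      have hsx : s x p = 2 * s y p + s t p := by
        rw [hxeq, map_add, map_smul, Finsupp.add_apply, Finsupp.smul_apply, smul_eq_mul]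
      obtain ⟨c, hc⟩ := ih y hyA p hp
      rw [hsx, zeroS p hp t N₁ ht, add_zero, hc]
      exact ⟨c, by ring⟩
  -- hence s x p = 0 for x ∈ A, p ∉ B
  have hzero : ∀ x ∈ A, ∀ p ∉ B, s x p = 0 := by
    intro x hx p hp
    by_contra hne
    have habs : ∀ k : ℕ, (2:ℤ)^k ≤ |s x p| := fun k =>
      Int.le_of_dvd (abs_pos.mpr hne) ((dvd_abs _ _).mpr (hdvd k x hx p hp))
    have h1 := habs (s x p).natAbs
    have h2 : ((s x p).natAbs : ℤ) < 2 ^ (s x p).natAbs := by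
      exact_mod_cast (Nat.lt_two_pow_self (n := (s x p).natAbs))
    rw [Int.abs_eq_natAbs] at h1
    omega
  -- A is contained in the span of B
  have hspan : A ⊆ (Submodule.span ℤ B : Submodule ℤ (ℕ → ℤ)) := by
    intro x hx
    have hsupp : ((s x).support : Set (ℕ → ℤ)) ⊆ B := by
      intro p hps
      by_contra hp
      exact Finsupp.mem_support_iff.mp hps (hzero x hx p hp)
    have := hs x
    rw [Finsupp.linearCombination_apply] at this
    exact Submodule.mem_span_set.mpr ⟨s x, hsupp, by simpa using this⟩
  -- span of a countable set is countable
  obtain ⟨f, hf⟩ := hBcount.exists_eq_range ⟨0, Or.inr rfl⟩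
  have hspanCount : (Submodule.span ℤ B : Set (ℕ → ℤ)).Countable := by
    rw [hf]
    haveI inst : Countable (Submodule.span ℤ (Set.range f)) := inferInstance
    exact Set.countable_coe_iff.mp inst
  have hAcount : A.Countable := hspanCount.mono hspan
  -- but A is uncountable: inject (ℕ → Bool) into it
  set F : (ℕ → Bool) → (ℕ → ℤ) := fun ε n => if ε n then 2^n else 0 with hF
  have hFA : ∀ ε, F ε ∈ A := by
    intro ε k
    refine ⟨k, fun n hn => ?_⟩
    simp only [hF]
    by_cases hε : ε n
    · simp [hε]; exact pow_dvd_pow 2 hn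
    · simp [hε]
  have hFinj : Function.Injective F := by
    intro a b hab
    funext n
    have h2n : (2:ℤ)^n ≠ 0 := by positivity
    have hcon := congrFun hab n
    simp only [hF] at hcon
    cases ha : a n <;> cases hb : b n <;> rw [ha, hb] at hcon <;> simp at hcon <;>
      first | rfl | exact absurd hcon.symm h2n | exact absurd hcon h2n
  have : Countable (ℕ → Bool) := by
    haveI : Countable A := hAcount.to_subtype
    exact Function.Injective.countable
      (f := fun ε => (⟨F ε, hFA ε⟩ : A)) (fun a b hab => hFinj (congrArg Subtype.val hab))
  obtain ⟨g0, hg0⟩ := exists_injective_nat (ℕ → Bool)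
  have hχ : Function.Injective (fun (S : Set ℕ) => fun n => decide (n ∈ S)) := by
    intro S T hST
    ext n
    have := congrFun hST n
    simpa [decide_eq_decide] using this
  exact Function.cantor_injective (fun S => g0 (fun n => decide (n ∈ S)))
    (fun S T hST => hχ (hg0 hST))
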